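/- The function f(α) = ((1-2α)/2) ln((1-α)/α) / (Φ⁻¹(α))² tends to 2/π as α → (1/2)⁻. -/

import Mathlib

open Real Set Filter Topology
open MeasureTheory

noncomputable def phi (y : ℝ) : ℝ := (Real.sqrt (2 * Real.pi))⁻¹ * Real.exp (-y ^ 2 / 2)

noncomputable def Phi (x : ℝ) : ℝ := ∫ y in Set.Iic x, phi y

noncomputable def PhiInv (a : ℝ) : ℝ := Function.invFun Phi a

lemma phi_pos (y : ℝ) : 0 < phi y := by
  unfold phi
  positivity

lemma phi_cont : Continuous phi := by
  unfold phi
  fun_prop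

lemma phi_integrable : Integrable phi := by
  unfold phi
  have h := integrable_exp_neg_mul_sq (b := (1/2 : ℝ)) (by norm_num)
  have e : ∀ y : ℝ, -y ^ 2 / 2 = -(1/2) * y ^ 2 := fun y => by ring
  simp only [e]
  exact h.const_mul _

lemma phi_total : ∫ y, phi y = 1 := by
  unfold phi
  rw [integral_const_mul]
  have e : ∀ y : ℝ, -y ^ 2 / 2 = -(1/2) * y ^ 2 := fun y => by ring
  simp only [e]
  rw [integral_gaussian]
  rw [show (π / (1/2 : ℝ)) = 2 * π by ring]
  rw [inv_mul_cancel₀ (by positivity)]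

lemma Phi_sub (a b : ℝ) : Phi b - Phi a = ∫ y in a..b, phi y :=
  intervalIntegral.integral_Iic_sub_Iic phi_integrable.integrableOn phi_integrable.integrableOn

lemma Phi_strictMono : StrictMono Phi := by
  intro a b hab
  have h : 0 < ∫ y in a..b, phi y :=
    intervalIntegral.intervalIntegral_pos_of_pos
      phi_integrable.intervalIntegrable (fun x => phi_pos x) hab
  have := Phi_sub a b
  linarith

lemma Phi_zero : Phi 0 = 1 / 2 := by
  have hsym : (∫ y in Iic (0:ℝ), phi y) = ∫ y in Ioi (0:ℝ), phi y := by
    have : (∫ y in Iic (0:ℝ), phi (-y)) = ∫ y in Ioi (-(0:ℝ)), phi y :=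
      integral_comp_neg_Iic 0 phi
    simp only [neg_zero] at this
    rw [← this]
    congr 1
    ext y
    unfold phi
    rw [show (-y)^2 = y^2 by ring]
  have hadd : (∫ y in Iic (0:ℝ), phi y) + (∫ y in Ioi (0:ℝ), phi y) = ∫ y, phi y :=
    intervalIntegral.integral_Iic_add_Ioi phi_integrable.integrableOn phi_integrable.integrableOn
  rw [phi_total, ← hsym] at hadd
  unfold Phi
  linarith

lemma Phi_hasDerivAt (x : ℝ) : HasDerivAt Phi (phi x) x := by
  have key : HasDerivAt (fun u => ∫ y in (0:ℝ)..u, phi y) (phi x) x :=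
    intervalIntegral.integral_hasDerivAt_right
      phi_integrable.intervalIntegrable
      phi_cont.aestronglyMeasurable.stronglyMeasurableAtFilter
      phi_cont.continuousAt
  have : Phi = fun u => Phi 0 + ∫ y in (0:ℝ)..u, phi y := by
    ext u
    have := Phi_sub 0 u
    linarith
  rw [this]
  simpa using (key.const_add (Phi 0))

lemma Phi_continuous : Continuous Phi :=
  continuous_iff_continuousAt.2 fun x => (Phi_hasDerivAt x).continuousAt

lemma Phi_pos (x : ℝ) : 0 < Phi x := by
  have h1 : Phi (x - 1) < Phi x := Phi_strictMono (by linarith)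
  have h0 : 0 ≤ Phi (x - 1) :=
    setIntegral_nonneg measurableSet_Iic fun y _ => (phi_pos y).le
  linarith

lemma PhiInv_eq {x a : ℝ} (h : Phi x = a) : PhiInv a = x := by
  have : Function.Injective Phi := Phi_strictMono.injective
  unfold PhiInv
  rw [← h, Function.leftInverse_invFun this x]

lemma PhiInv_mem {ε a : ℝ} (hε : 0 < ε) (h1 : Phi (-ε) < a) (h2 : a < 1/2) :
    PhiInv a ∈ Ioo (-ε) 0 ∧ Phi (PhiInv a) = a := by
  have hc : ContinuousOn Phi (Icc (-ε) 0) := Phi_continuous.continuousOn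
  have hiv := intermediate_value_Ioo (show (-ε:ℝ) ≤ 0 by linarith) hc
  rw [Phi_zero] at hiv
  obtain ⟨x, hx, hxa⟩ := hiv ⟨h1, h2⟩
  rw [PhiInv_eq hxa]
  exact ⟨hx, hxa⟩

lemma eventually_PhiInv_mem {ε : ℝ} (hε : 0 < ε) :
    ∀ᶠ a in 𝓝[<] (1/2:ℝ), PhiInv a ∈ Ioo (-ε) 0 ∧ Phi (PhiInv a) = a := by
  have hlt : Phi (-ε) < 1/2 := by
    have := Phi_strictMono (show -ε < 0 by linarith)
    rwa [Phi_zero] at this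
  filter_upwards [eventually_nhdsWithin_of_eventually_nhds (eventually_gt_nhds hlt),
    self_mem_nhdsWithin] with a h1 h2
  exact PhiInv_mem hε h1 h2

lemma tendsto_PhiInv : Tendsto PhiInv (𝓝[<] (1/2:ℝ)) (𝓝[<] (0:ℝ)) := by
  rw [tendsto_nhdsWithin_iff]
  constructor
  · rw [Metric.tendsto_nhds]
    intro ε hε
    filter_upwards [eventually_PhiInv_mem hε] with a ha
    rw [Real.dist_eq, sub_zero, abs_lt]
    exact ⟨ha.1.1, ha.1.2.trans hε⟩
  · filter_upwards [eventually_PhiInv_mem one_pos] with a ha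
    exact ha.1.2

lemma tendsto_slope_Phi :
    Tendsto (fun x => (Phi x - 1/2) / x) (𝓝[<] (0:ℝ)) (𝓝 (Real.sqrt (2*π))⁻¹) := by
  have hd : HasDerivAt Phi (phi 0) 0 := Phi_hasDerivAt 0
  have h0 : phi 0 = (Real.sqrt (2*π))⁻¹ := by
    unfold phi; norm_num
  rw [h0] at hd
  have := (hasDerivAt_iff_tendsto_slope.1 hd).mono_left
    (nhdsWithin_mono 0 (fun x (hx : x < 0) => ne_of_lt hx))
  refine this.congr' ?_
  filter_upwards [self_mem_nhdsWithin] with x hx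
  rw [slope_def_field, Phi_zero, sub_zero]

lemma tendsto_G :
    Tendsto (fun t => (Real.log (1/2 - t) - Real.log (1/2 + t)) / t)
      (𝓝[≠] (0:ℝ)) (𝓝 (-4)) := by
  have h1 : HasDerivAt (fun t : ℝ => Real.log (1/2 - t)) (-2) 0 := by
    have := ((hasDerivAt_const (0:ℝ) (1/2:ℝ)).sub (hasDerivAt_id 0)).log
      (by norm_num : (1/2 : ℝ) - id 0 ≠ 0)
    convert this using 1
    all_goals norm_num [Pi.sub_apply, id]
  have h2 : HasDerivAt (fun t : ℝ => Real.log (1/2 + t)) 2 0 := by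
    have := ((hasDerivAt_const (0:ℝ) (1/2:ℝ)).add (hasDerivAt_id 0)).log
      (by norm_num : (1/2 : ℝ) + id 0 ≠ 0)
    convert this using 1
    all_goals norm_num [Pi.add_apply, id]
  have hd : HasDerivAt (fun t : ℝ => Real.log (1/2 - t) - Real.log (1/2 + t)) (-4) 0 := by
    have := h1.sub h2
    exact this.congr_deriv (by norm_num)
  have := hasDerivAt_iff_tendsto_slope.1 hd
  refine this.congr' ?_
  filter_upwards [self_mem_nhdsWithin] with t ht
  rw [slope_def_field]
  norm_num

lemma tendsto_h : Tendsto (fun x => Phi x - 1/2) (𝓝[<] (0:ℝ)) (𝓝[≠] (0:ℝ)) := by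
  rw [tendsto_nhdsWithin_iff]
  constructor
  · have : Tendsto (fun x => Phi x - 1/2) (𝓝 (0:ℝ)) (𝓝 (Phi 0 - 1/2)) :=
      (Phi_continuous.tendsto 0).sub tendsto_const_nhds
    rw [Phi_zero] at this
    simpa using this.mono_left nhdsWithin_le_nhds
  · filter_upwards [self_mem_nhdsWithin] with x (hx : x < 0)
    have : Phi x < 1/2 := by
      have := Phi_strictMono hx; rwa [Phi_zero] at this
    simp only [mem_compl_iff, mem_singleton_iff]
    intro h; linarith [sub_eq_zero.1 h]

lemma tendsto_F :
    Tendsto (fun x => ((1 - 2 * Phi x) / 2 * Real.log ((1 - Phi x) / Phi x)) / x ^ 2)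
      (𝓝[<] (0:ℝ)) (𝓝 (2 / π)) := by
  have hmain : Tendsto
      (fun x => -(((Phi x - 1/2) / x) ^ 2) *
        ((Real.log (1/2 - (Phi x - 1/2)) - Real.log (1/2 + (Phi x - 1/2))) / (Phi x - 1/2)))
      (𝓝[<] (0:ℝ)) (𝓝 (-(((Real.sqrt (2*π))⁻¹) ^ 2) * (-4))) :=
    ((tendsto_slope_Phi.pow 2).neg).mul (tendsto_G.comp tendsto_h)
  have heq : -(((Real.sqrt (2*π))⁻¹) ^ 2) * (-4) = 2 / π := by
    rw [inv_pow, sq_sqrt (by positivity : (0:ℝ) ≤ 2*π)]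
    field_simp
    ring
  rw [heq] at hmain
  refine Tendsto.congr' ?_ hmain
  filter_upwards [self_mem_nhdsWithin] with x (hx : x < 0)
  have hPpos := Phi_pos x
  have hPlt : Phi x < 1/2 := by
    have := Phi_strictMono hx; rwa [Phi_zero] at this
  have hx0 : x ≠ 0 := ne_of_lt hx
  have hh : Phi x - 1/2 ≠ 0 := by intro h; nlinarith
  have e1 : 1/2 - (Phi x - 1/2) = 1 - Phi x := by ring
  have e2 : 1/2 + (Phi x - 1/2) = Phi x := by ring
  rw [e1, e2, Real.log_div (by linarith) (ne_of_gt hPpos)]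
  have gen : ∀ (h L y : ℝ), y ≠ 0 → h ≠ 0 → -((h/y)^2) * (L/h) = (-h*L)/y^2 := by
    intro h L y hy hh
    field_simp
  rw [gen (Phi x - 1/2) (Real.log (1 - Phi x) - Real.log (Phi x)) x hx0 hh]
  congr 1
  ring

theorem f_limit_half :
    Filter.Tendsto
      (fun α : ℝ => ((1 - 2 * α) / 2 * Real.log ((1 - α) / α)) / (PhiInv α) ^ 2)
      (𝓝[<] (1 / 2)) (𝓝 (2 / Real.pi)) := by
  have h := tendsto_F.comp tendsto_PhiInv
  refine Tendsto.congr' ?_ h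
  filter_upwards [eventually_PhiInv_mem one_pos] with a ha
  simp only [Function.comp_apply]
  rw [ha.2]
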